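/- Let A ∈ ℝ^{n×n} be invertible, BK ∈ ℝ^{n×n}, δ, ε ∈ (0,1), π_δ(t) = δ⌊t/δ⌋, and let V be an n-dimensional standard Brownian motion. Define L₃(t) = −∫_0^t (e^{(s−π_δ(s))A} − I) A^{−1}BK V_{π_δ(s)} ds. Then for any T > 0, E[sup_{0 ≤ t ≤ T} |L₃(t)|] ≤ δ |A| e^{δ|A|} |A^{−1}BK| ∫_0^T E[sup_{0 ≤ u ≤ s} |V_u|] ds ≤ δ |A| e^{|A|} |A^{−1}BK| Λ √n T^{3/2}, where Λ is a universal constant from the Burkholder–Davis–Gundy inequality. -/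

import Mathlib

/- `A` is an invertible square matrix and `BK` the product of the matrices
`B, K` (all represented as continuous linear maps between Euclidean spaces),
`Ring.inverse A = A⁻¹`, `π_δ(t) = δ⌊t/δ⌋`, `V` is a standard
`n`-dimensional Brownian motion, and
`L₃(t) = −∫_0^t (e^{(s−π_δ(s))A} − I) A⁻¹BK V_{π_δ(s)} ds` (pathwise).
`Λ` is a universal constant from the Burkholder–Davis–Gundy inequality,
i.e. a constant satisfying `E[sup_{0≤u≤s}|V_u|] ≤ Λ √(ns)` for all `s ≥ 0`
(taken here as a hypothesis). `T^{3/2}` is the real power `T ^ ((3:ℝ)/2)`. -/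

open MeasureTheory ProbabilityTheory

noncomputable section

abbrev Euc (n : ℕ) := EuclideanSpace ℝ (Fin n)
abbrev Mat (n : ℕ) := Euc n →L[ℝ] Euc n

/-- A standard `n`-dimensional Brownian motion: starts at `0`, has continuous
paths, increments over disjoint intervals (and across the `n` independent
coordinates) are independent, and each coordinate of the increment over
`[s,t]` is a centered Gaussian of variance `t − s`. -/
structure IsStdBrownianMotion {Ω : Type*} [MeasurableSpace Ω] (P : Measure Ω)
    (n : ℕ) (W : ℝ → Ω → Euc n) : Prop where
  isProb : IsProbabilityMeasure P
  init : ∀ ω, W 0 ω = 0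
  meas : ∀ t, Measurable (W t)
  cont : ∀ ω, Continuous fun t => W t ω
  gauss : ∀ s t : ℝ, 0 ≤ s → s ≤ t → ∀ i : Fin n,
    Measure.map (fun ω => W t ω i - W s ω i) P = gaussianReal 0 (Real.toNNReal (t - s))
  indep : ∀ (m : ℕ) (u : ℕ → ℝ), Monotone u →
    iIndepFun
      (fun p : Fin m × Fin n => fun ω => W (u (p.1 + 1)) ω p.2 - W (u p.1) ω p.2) P

open Real Set Filter
open scoped NNReal Topology ENNReal

lemma exp_sub_one_norm_le {𝔸 : Type*} [NormedRing 𝔸] [NormedAlgebra ℝ 𝔸] [CompleteSpace 𝔸]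
    (x : 𝔸) : ‖NormedSpace.exp x - 1‖ ≤ ‖x‖ * Real.exp ‖x‖ := by
  set t := ‖x‖ with ht
  have ht0 : 0 ≤ t := norm_nonneg x
  have hsum : Summable (fun k : ℕ => ((k.factorial : ℝ))⁻¹ • x ^ k) := NormedSpace.expSeries_summable' x
  have hnorm : Summable (fun k : ℕ => ‖(((k + 1).factorial : ℝ))⁻¹ • x ^ (k+1)‖) := by
    exact (summable_nat_add_iff (f := fun k : ℕ => ‖((k.factorial : ℝ))⁻¹ • x ^ k‖) 1).mpr (NormedSpace.norm_expSeries_summable' x)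
  have hR : Summable (fun k : ℕ => t ^ (k+1) / (k + 1).factorial) := by
    exact (summable_nat_add_iff (f := fun k : ℕ => t ^ k / k.factorial) 1).mpr (Real.summable_pow_div_factorial t)
  have hterm : ∀ k : ℕ, ‖(((k + 1).factorial : ℝ))⁻¹ • x ^ (k+1)‖ ≤ t ^ (k+1) / (k + 1).factorial := by
    intro k
    rw [norm_smul, Real.norm_eq_abs, abs_of_nonneg (by positivity)]
    rw [div_eq_inv_mul]
    exact mul_le_mul_of_nonneg_left (norm_pow_le' x k.succ_pos) (by positivity)
  have hexp : NormedSpace.exp x = 1 + ∑' k : ℕ, (((k + 1).factorial : ℝ))⁻¹ • x ^ (k+1) := by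
    have h := congrFun (NormedSpace.exp_eq_tsum (𝕂 := ℝ) (𝔸 := 𝔸)) x
    rw [h, Summable.tsum_eq_zero_add hsum]
    simp
  have hrexp : Real.exp t = 1 + ∑' k : ℕ, t ^ (k+1) / (k + 1).factorial := by
    have h : Real.exp t = ∑' k : ℕ, t ^ k / k.factorial := by
      rw [Real.exp_eq_exp_ℝ, NormedSpace.exp_eq_tsum_div]
    rw [h, Summable.tsum_eq_zero_add (Real.summable_pow_div_factorial t)]
    simp
  have h1 : ‖NormedSpace.exp x - 1‖ ≤ Real.exp t - 1 := by
    rw [hexp]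
    simp only [add_sub_cancel_left]
    calc ‖∑' k : ℕ, (((k + 1).factorial : ℝ))⁻¹ • x ^ (k+1)‖ ≤ ∑' k : ℕ, ‖(((k + 1).factorial : ℝ))⁻¹ • x ^ (k+1)‖ :=
          norm_tsum_le_tsum_norm hnorm
      _ ≤ ∑' k : ℕ, t ^ (k+1) / (k + 1).factorial := Summable.tsum_le_tsum hterm hnorm hR
      _ = Real.exp t - 1 := by rw [hrexp]; ring
  have h2 : Real.exp t - 1 ≤ t * Real.exp t := by
    have hneg : 1 - t ≤ Real.exp (-t) := by linarith [Real.add_one_le_exp (-t)]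
    have hmul : (1 - t) * Real.exp t ≤ Real.exp (-t) * Real.exp t :=
      mul_le_mul_of_nonneg_right hneg (Real.exp_pos t).le
    rw [← Real.exp_add] at hmul
    simp at hmul
    nlinarith [Real.exp_pos t]
  linarith

lemma euc_norm_le_sum_abs {n : ℕ} (x : EuclideanSpace ℝ (Fin n)) :
    ‖x‖ ≤ ∑ i : Fin n, |x i| := by
  rw [EuclideanSpace.norm_eq]
  have h1 : ∑ i : Fin n, ‖x i‖ ^ 2 ≤ (∑ i : Fin n, |x i|) ^ 2 := by
    rw [sq (∑ i : Fin n, |x i|), Finset.sum_mul]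
    apply Finset.sum_le_sum
    intro i _
    rw [Real.norm_eq_abs, sq]
    exact mul_le_mul_of_nonneg_left
      (Finset.single_le_sum (f := fun j => |x j|) (fun j _ => abs_nonneg _) (Finset.mem_univ i))
      (abs_nonneg _)
  calc Real.sqrt (∑ i : Fin n, ‖x i‖ ^ 2) ≤ Real.sqrt ((∑ i : Fin n, |x i|) ^ 2) :=
        Real.sqrt_le_sqrt h1
    _ = ∑ i : Fin n, |x i| := Real.sqrt_sq (Finset.sum_nonneg fun i _ => abs_nonneg _)

lemma sqrt_pow_eq {x : ℝ} (hx : 0 ≤ x) (j : ℕ) : Real.sqrt (x ^ j) = Real.sqrt x ^ j := by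
  induction j with
  | zero => simp
  | succ k ih => rw [pow_succ, pow_succ, Real.sqrt_mul (pow_nonneg hx k), ih]

lemma gpdf_deriv {v : ℝ≥0} (hv : v ≠ 0) (x : ℝ) :
    HasDerivAt (fun y : ℝ => -((v : ℝ) * gaussianPDFReal 0 v y))
      (x * gaussianPDFReal 0 v x) x := by
  have hw0 : (0 : ℝ) < (v : ℝ) := by exact_mod_cast pos_iff_ne_zero.mpr hv
  set c : ℝ := (Real.sqrt (2 * π * (v : ℝ)))⁻¹ with hc
  have hpdf : ∀ y : ℝ, gaussianPDFReal 0 v y = c * Real.exp (-(y - 0)^2 / (2 * (v:ℝ))) :=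
    fun y => rfl
  have h1 : HasDerivAt (fun z : ℝ => -(z - 0)^2 / (2 * (v:ℝ))) (-x / (v:ℝ)) x := by
    have h0 : HasDerivAt (fun z : ℝ => z - 0) 1 x := (hasDerivAt_id x).sub_const 0
    have h2 := (h0.pow 2).neg.div_const (2 * (v:ℝ))
    convert h2 using 1
    · rfl
    · rfl
    · rfl
    · field_simp
      ring
  have h3 := ((h1.exp.const_mul c).const_mul (v:ℝ)).neg
  have hfun : (fun y : ℝ => -((v : ℝ) * gaussianPDFReal 0 v y))
      = fun y => -((v:ℝ) * (c * Real.exp (-(y - 0)^2 / (2 * (v:ℝ))))) := by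
    funext y; rw [hpdf y]
  rw [hfun, hpdf x]
  convert h3 using 1
  · rfl
  · rfl
  · rfl
  · field_simp

lemma gpdf_integrable_mul {v : ℝ≥0} (hv : v ≠ 0) :
    Integrable (fun x => x * gaussianPDFReal 0 v x) := by
  have hw0 : (0 : ℝ) < (v : ℝ) := by exact_mod_cast pos_iff_ne_zero.mpr hv
  have hb : (0:ℝ) < (2 * (v:ℝ))⁻¹ := by positivity
  have heq : (fun x : ℝ => x * gaussianPDFReal 0 v x)
      = fun x => (Real.sqrt (2 * π * (v:ℝ)))⁻¹ * (x * Real.exp (-((2*(v:ℝ))⁻¹) * x^2)) := by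
    funext x
    have harg : -(x - 0)^2/(2*(v:ℝ)) = -((2*(v:ℝ))⁻¹) * x^2 := by ring
    simp only [gaussianPDFReal]
    rw [harg]
    ring
  rw [heq]
  exact (integrable_mul_exp_neg_mul_sq hb).const_mul _

lemma gauss_tail_integral {v : ℝ≥0} (hv : v ≠ 0) (a : ℝ) :
    ∫ x in Ioi a, x * gaussianPDFReal 0 v x = (v : ℝ) * gaussianPDFReal 0 v a := by
  have hw0 : (0 : ℝ) < (v : ℝ) := by exact_mod_cast pos_iff_ne_zero.mpr hv
  set c : ℝ := (Real.sqrt (2 * π * (v : ℝ)))⁻¹ with hc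
  have hc0 : 0 ≤ c := by positivity
  have htends : Tendsto (fun y : ℝ => -((v : ℝ) * gaussianPDFReal 0 v y)) atTop (𝓝 0) := by
    have harg : Tendsto (fun y : ℝ => -(y - 0)^2 / (2 * (v:ℝ))) atTop atBot := by
      have h2 : Tendsto (fun y : ℝ => y^2 * (-(2 * (v:ℝ))⁻¹)) atTop atBot :=
        (tendsto_pow_atTop two_ne_zero).atTop_mul_const_of_neg (neg_lt_zero.mpr (by positivity))
      refine h2.congr fun y => by ring
    have hexp : Tendsto (fun y : ℝ => Real.exp (-(y - 0)^2 / (2 * (v:ℝ)))) atTop (𝓝 0) :=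
      Real.tendsto_exp_atBot.comp harg
    have : Tendsto (fun y : ℝ => -((v:ℝ) * (c * Real.exp (-(y - 0)^2 / (2 * (v:ℝ)))))) atTop
        (𝓝 (-((v:ℝ) * (c * 0)))) := (((hexp.const_mul c).const_mul (v:ℝ)).neg)
    simpa [gaussianPDFReal, hc] using this
  have h := integral_Ioi_of_hasDerivAt_of_tendsto' (a := a)
    (f := fun y => -((v : ℝ) * gaussianPDFReal 0 v y))
    (f' := fun x => x * gaussianPDFReal 0 v x)
    (fun x _ => gpdf_deriv hv x) ((gpdf_integrable_mul hv).integrableOn) htends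
  rw [h]
  ring

lemma gpdf_even {v : ℝ≥0} (x : ℝ) : gaussianPDFReal 0 v (-x) = gaussianPDFReal 0 v x := by
  simp only [gaussianPDFReal]
  ring_nf

lemma gauss_tail {Ω : Type*} [MeasurableSpace Ω] (P : Measure Ω)
    (X : Ω → ℝ) (hX : Measurable X) (v : ℝ≥0)
    (hmap : Measure.map X P = gaussianReal 0 v) {a : ℝ} (ha : 0 < a) :
    ∫⁻ ω, ENNReal.ofReal (max (|X ω| - a) 0) ∂P
      ≤ ENNReal.ofReal (2 * Real.sqrt v * Real.exp (-a^2 / (2*(v:ℝ)))) := by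
  have hg : Measurable fun x : ℝ => ENNReal.ofReal (max (|x| - a) 0) :=
    ((measurable_abs.sub_const a).max measurable_const).ennreal_ofReal
  have hmap' : ∫⁻ ω, ENNReal.ofReal (max (|X ω| - a) 0) ∂P
      = ∫⁻ x, ENNReal.ofReal (max (|x| - a) 0) ∂(gaussianReal 0 v) := by
    rw [← hmap, lintegral_map hg hX]
  rw [hmap']
  by_cases hv : v = 0
  · subst hv
    rw [gaussianReal_zero_var, lintegral_dirac' _ hg]
    have : max (|(0:ℝ)| - a) 0 = 0 := max_eq_right (by simp [ha.le])
    rw [this]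
    simp
  have hw0 : (0 : ℝ) < (v : ℝ) := by exact_mod_cast pos_iff_ne_zero.mpr hv
  set φ : ℝ → ℝ := gaussianPDFReal 0 v with hφ
  have hφ0 : ∀ x, 0 ≤ φ x := gaussianPDFReal_nonneg 0 v
  rw [gaussianReal_of_var_ne_zero 0 hv,
    lintegral_withDensity_eq_lintegral_mul _ (measurable_gaussianPDF 0 v) hg]
  have hmono : ∀ x : ℝ, (gaussianPDF 0 v * fun x => ENNReal.ofReal (max (|x| - a) 0)) x ≤
      (Ioi a).indicator (fun x => ENNReal.ofReal (x * φ x)) x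
      + (Iic (-a)).indicator (fun x => ENNReal.ofReal (-x * φ x)) x := by
    intro x
    have hlhs : (gaussianPDF 0 v * fun x => ENNReal.ofReal (max (|x| - a) 0)) x
        = ENNReal.ofReal (φ x * max (|x| - a) 0) := by
      simp only [Pi.mul_apply, gaussianPDF]
      rw [← ENNReal.ofReal_mul (hφ0 x)]
    rw [hlhs]
    by_cases h1 : a < x
    · rw [Set.indicator_of_mem (show x ∈ Ioi a from h1)]
      refine le_trans (ENNReal.ofReal_le_ofReal ?_) (self_le_add_right _ _)
      have hx : |x| = x := abs_of_pos (ha.trans h1)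
      rw [hx]
      have : max (x - a) 0 = x - a := max_eq_left (by linarith)
      rw [this]
      nlinarith [hφ0 x]
    by_cases h2 : x ≤ -a
    · rw [Set.indicator_of_mem (show x ∈ Iic (-a) from h2)]
      refine le_trans (ENNReal.ofReal_le_ofReal ?_) (self_le_add_left _ _)
      have hx : |x| = -x := abs_of_neg (by linarith)
      rw [hx]
      have : max (-x - a) 0 = -x - a := max_eq_left (by linarith)
      rw [this]
      nlinarith [hφ0 x]
    · have hxa : |x| ≤ a := abs_le.mpr ⟨by linarith, by linarith⟩
      have : max (|x| - a) 0 = 0 := max_eq_right (by linarith)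
      rw [this, mul_zero]
      simp
  have hmeas1 : Measurable fun x : ℝ => ENNReal.ofReal (x * φ x) :=
    (measurable_id.mul (measurable_gaussianPDFReal 0 v)).ennreal_ofReal
  have hmeas2 : Measurable fun x : ℝ => ENNReal.ofReal (-x * φ x) :=
    (measurable_neg.mul (measurable_gaussianPDFReal 0 v)).ennreal_ofReal
  calc ∫⁻ x, (gaussianPDF 0 v * fun x => ENNReal.ofReal (max (|x| - a) 0)) x
      ≤ ∫⁻ x, ((Ioi a).indicator (fun x => ENNReal.ofReal (x * φ x)) x
        + (Iic (-a)).indicator (fun x => ENNReal.ofReal (-x * φ x)) x) := lintegral_mono hmono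
    _ = (∫⁻ x in Ioi a, ENNReal.ofReal (x * φ x))
        + ∫⁻ x in Iic (-a), ENNReal.ofReal (-x * φ x) := by
        rw [lintegral_add_left (hmeas1.indicator measurableSet_Ioi),
          lintegral_indicator measurableSet_Ioi, lintegral_indicator measurableSet_Iic]
    _ = ENNReal.ofReal (∫ x in Ioi a, x * φ x) + ENNReal.ofReal (∫ x in Iic (-a), -x * φ x) := by
        rw [ofReal_integral_eq_lintegral_ofReal ((gpdf_integrable_mul hv).integrableOn)
          ((ae_restrict_iff' measurableSet_Ioi).mpr (ae_of_all _ fun x hx =>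
            mul_nonneg (le_of_lt (ha.trans hx)) (hφ0 x))),
          ofReal_integral_eq_lintegral_ofReal
            (((gpdf_integrable_mul hv).neg.congr (ae_of_all _ fun x => by simp [Pi.neg_apply, hφ])).integrableOn)
          ((ae_restrict_iff' measurableSet_Iic).mpr (ae_of_all _ fun x hx =>
            mul_nonneg (by simp only [mem_Iic] at hx; linarith) (hφ0 x)))]
    _ = ENNReal.ofReal ((v:ℝ) * φ a) + ENNReal.ofReal ((v:ℝ) * φ a) := by
        congr 1
        · rw [gauss_tail_integral hv a]
        · have hsub : ∫ x in Iic (-a), -x * φ x = ∫ x in Ioi a, x * φ x := by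
            have h := integral_comp_neg_Iic (-a) (fun y => y * φ y)
            rw [neg_neg] at h
            rw [← h]
            refine setIntegral_congr_fun measurableSet_Iic fun x _ => ?_
            simp only [hφ]
            rw [gpdf_even]
          rw [hsub, gauss_tail_integral hv a]
    _ ≤ ENNReal.ofReal (2 * Real.sqrt v * Real.exp (-a^2 / (2*(v:ℝ)))) := by
        rw [← ENNReal.ofReal_add (mul_nonneg hw0.le (hφ0 a)) (mul_nonneg hw0.le (hφ0 a))]
        apply ENNReal.ofReal_le_ofReal
        have hφa : φ a = (Real.sqrt (2 * π * (v : ℝ)))⁻¹ * Real.exp (-a^2 / (2*(v:ℝ))) := by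
          simp only [hφ, gaussianPDFReal, sub_zero]
        rw [hφa]
        have hkey : (v:ℝ) * (Real.sqrt (2 * π * (v : ℝ)))⁻¹ ≤ Real.sqrt v := by
          rw [← div_eq_mul_inv]
          have h1 : Real.sqrt (v:ℝ) ≤ Real.sqrt (2 * π * (v:ℝ)) :=
            Real.sqrt_le_sqrt (by nlinarith [Real.pi_gt_three])
          have h2 : (v:ℝ) / Real.sqrt (2 * π * (v:ℝ)) ≤ (v:ℝ) / Real.sqrt (v:ℝ) := by
            apply div_le_div_of_nonneg_left hw0.le (Real.sqrt_pos.mpr hw0) h1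
          rw [Real.div_sqrt] at h2
          exact h2
        nlinarith [Real.exp_pos (-a^2 / (2*(v:ℝ))), Real.sqrt_nonneg (v:ℝ),
          Real.exp_le_exp.mpr (le_refl (-a^2 / (2*(v:ℝ)))),
          mul_le_mul_of_nonneg_right hkey (Real.exp_pos (-a^2 / (2*(v:ℝ)))).le]

lemma dyadic_chain {E : Type*} [NormedAddCommGroup E] {f : ℝ → E} (hf : Continuous f)
    {s : ℝ} (hs : 0 < s) {g : ℕ → ℝ} (hg0 : ∀ j, 0 ≤ g j)
    (hinc : ∀ j : ℕ, ∀ k : ℕ, k < 2^j →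
      ‖f (((k:ℝ) + 1) * s / 2^j) - f ((k:ℝ) * s / 2^j)‖ ≤ g j)
    {t : ℝ} (ht : t ∈ Set.Icc 0 s) :
    ENNReal.ofReal ‖f t - f 0‖ ≤ ∑' j, ENNReal.ofReal (g j) := by
  obtain ⟨ht0, hts⟩ := ht
  set m : ℕ → ℕ := fun j => ⌊t * 2^j / s⌋₊ with hm
  set a : ℕ → ℝ := fun j => (m j : ℝ) * s / 2^j with ha
  have h2pos : ∀ j : ℕ, (0:ℝ) < 2^j := fun j => by positivity
  have hx0 : ∀ j : ℕ, (0:ℝ) ≤ t * 2^j / s := fun j => by positivity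
  have hmle : ∀ j, (m j : ℝ) ≤ t * 2^j / s := fun j => Nat.floor_le (hx0 j)
  have hlt : ∀ j, t * 2^j / s < (m j : ℝ) + 1 := fun j => Nat.lt_floor_add_one _
  have ha_le : ∀ j, a j ≤ t := by
    intro j
    rw [ha, div_le_iff₀ (h2pos j)]
    have := mul_le_mul_of_nonneg_right (hmle j) hs.le
    rwa [div_mul_cancel₀ _ hs.ne'] at this
  have ha_gt : ∀ j, t - s / 2^j < a j := by
    intro j
    have h1 := mul_lt_mul_of_pos_right (hlt j) hs
    rw [div_mul_cancel₀ _ hs.ne'] at h1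
    rw [ha, sub_lt_iff_lt_add, ← add_div, lt_div_iff₀ (h2pos j)]
    linarith
  have hm_le : ∀ j, m j ≤ 2^j := by
    intro j
    have : (m j : ℝ) ≤ 2^j := by
      refine (hmle j).trans ?_
      rw [div_le_iff₀ hs]
      calc t * 2^j ≤ s * 2^j := mul_le_mul_of_nonneg_right hts (h2pos j).le
        _ = 2^j * s := by ring
    exact_mod_cast this
  have hstep : ∀ j, ‖f (a (j+1)) - f (a j)‖ ≤ g (j+1) := by
    intro j
    have hdouble : t * 2^(j+1) / s = 2 * (t * 2^j / s) := by ring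
    have hcase : m (j+1) = 2 * m j ∨ m (j+1) = 2 * m j + 1 := by
      have hle : 2 * m j ≤ m (j+1) := by
        apply Nat.le_floor
        rw [hdouble]
        push_cast
        linarith [hmle j]
      have hlt2 : m (j+1) < 2 * m j + 2 := by
        rw [hm]
        apply Nat.floor_lt (hx0 (j+1)) |>.mpr
        rw [hdouble]
        push_cast
        linarith [hlt j]
      omega
    rcases hcase with hc | hc
    · have : a (j+1) = a j := by
        rw [ha]
        simp only [hc]
        push_cast
        ring
      rw [this, sub_self, norm_zero]
      exact hg0 (j+1)
    · have hklt : 2 * m j < 2^(j+1) := by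
        have := hm_le (j+1)
        omega
      have h := hinc (j+1) (2 * m j) hklt
      have e1 : a (j+1) = ((2 * m j : ℕ) : ℝ) * s / 2^(j+1) + s / 2^(j+1) := by
        rw [ha]
        simp only [hc]
        push_cast
        ring
      have e2 : a j = ((2 * m j : ℕ) : ℝ) * s / 2^(j+1) := by
        rw [ha]
        push_cast
        ring
      have e3 : (((2 * m j : ℕ) : ℝ) + 1) * s / 2^(j+1)
          = ((2 * m j : ℕ) : ℝ) * s / 2^(j+1) + s / 2^(j+1) := by ring
      rw [e1, e2]
      rw [e3] at h
      exact h
  have hbase : ‖f (a 0) - f 0‖ ≤ g 0 := by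
    have hm0 : m 0 ≤ 1 := by
      have : (m 0 : ℝ) ≤ 1 := by
        refine (hmle 0).trans ?_
        rw [pow_zero, mul_one, div_le_one hs]
        exact hts
      exact_mod_cast this
    interval_cases h : m 0
    · have : a 0 = 0 := by rw [ha]; simp [h]
      rw [this, sub_self, norm_zero]
      exact hg0 0
    · have h1 := hinc 0 0 (by norm_num)
      norm_num at h1
      have e1 : a 0 = s := by rw [ha]; simp [h]
      rw [e1]
      exact h1
  have hpartial : ∀ J : ℕ, ‖f (a J) - f 0‖ ≤ ∑ j ∈ Finset.range (J+1), g j := by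
    intro J
    have htri : dist (f (a 0)) (f (a J)) ≤ ∑ i ∈ Finset.range J, dist (f (a i)) (f (a (i+1))) :=
      dist_le_range_sum_dist (fun i => f (a i)) J
    have hsum : ∑ i ∈ Finset.range J, dist (f (a i)) (f (a (i+1)))
        ≤ ∑ i ∈ Finset.range J, g (i+1) := by
      apply Finset.sum_le_sum
      intro i _
      rw [dist_eq_norm, norm_sub_rev]
      exact hstep i
    calc ‖f (a J) - f 0‖ = dist (f (a J)) (f 0) := by rw [dist_eq_norm]
      _ ≤ dist (f (a J)) (f (a 0)) + dist (f (a 0)) (f 0) := dist_triangle _ _ _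
      _ ≤ (∑ i ∈ Finset.range J, g (i+1)) + g 0 := by
          rw [dist_comm (f (a J))]
          refine add_le_add (htri.trans hsum) ?_
          rw [dist_eq_norm]
          exact hbase
      _ = ∑ j ∈ Finset.range (J+1), g j := (Finset.sum_range_succ' g J).symm
  have hlim : Tendsto (fun J : ℕ => f (a J)) atTop (𝓝 (f t)) := by
    have hA : Tendsto a atTop (𝓝 t) := by
      have hgeom : Tendsto (fun J : ℕ => s / 2^J) atTop (𝓝 0) := by
        have := tendsto_pow_atTop_nhds_zero_of_lt_one (by norm_num : (0:ℝ) ≤ 1/2)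
          (by norm_num : (1/2 : ℝ) < 1)
        have h2 := this.const_mul s
        rw [mul_zero] at h2
        refine h2.congr fun J => ?_
        rw [div_pow, one_pow, mul_one_div]
      have hlow : Tendsto (fun J : ℕ => t - s / 2^J) atTop (𝓝 t) := by
        have := hgeom.const_sub t
        rwa [sub_zero] at this
      exact tendsto_of_tendsto_of_tendsto_of_le_of_le hlow tendsto_const_nhds
        (fun J => (ha_gt J).le) (fun J => ha_le J)
    exact (hf.tendsto t).comp hA
  by_cases hS : (∑' j, ENNReal.ofReal (g j)) = ⊤
  · rw [hS]; exact le_top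
  · have hb : ∀ J : ℕ, ‖f (a J) - f 0‖ ≤ (∑' j, ENNReal.ofReal (g j)).toReal := by
      intro J
      refine (hpartial J).trans ?_
      have h1 : ENNReal.ofReal (∑ j ∈ Finset.range (J+1), g j) ≤ ∑' j, ENNReal.ofReal (g j) := by
        rw [ENNReal.ofReal_sum_of_nonneg (fun j _ => hg0 j)]
        exact ENNReal.sum_le_tsum _
      have h2 := ENNReal.toReal_mono hS h1
      rwa [ENNReal.toReal_ofReal (Finset.sum_nonneg fun j _ => hg0 j)] at h2
    have hlim2 : Tendsto (fun J : ℕ => ‖f (a J) - f 0‖) atTop (𝓝 ‖f t - f 0‖) :=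
      (hlim.sub tendsto_const_nhds).norm
    have hfin : ‖f t - f 0‖ ≤ (∑' j, ENNReal.ofReal (g j)).toReal := le_of_tendsto' hlim2 hb
    calc ENNReal.ofReal ‖f t - f 0‖
        ≤ ENNReal.ofReal ((∑' j, ENNReal.ofReal (g j)).toReal) := ENNReal.ofReal_le_ofReal hfin
      _ = ∑' j, ENNReal.ofReal (g j) := ENNReal.ofReal_toReal hS

lemma clamp_mem {s : ℝ} (hs : 0 ≤ s) (x : ℝ) : max 0 (min s x) ∈ Set.Icc 0 s :=
  ⟨le_max_left _ _, max_le hs (min_le_left _ _)⟩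

lemma clamp_dist {s u : ℝ} (hu : u ∈ Set.Icc 0 s) (x : ℝ) :
    |max 0 (min s x) - u| ≤ |x - u| := by
  have hcu : max 0 (min s u) = u := by
    rw [min_eq_right hu.2, max_eq_right hu.1]
  calc |max 0 (min s x) - u| = |max (min s x) 0 - max (min s u) 0| := by
        rw [max_comm, max_comm (min s u) 0, hcu]
    _ ≤ |min s x - min s u| := abs_max_sub_max_le_abs _ _ _
    _ ≤ max |s - s| |x - u| := abs_min_sub_min_le_max s x s u
    _ = |x - u| := by simp

lemma bdd_icc {f : ℝ → ℝ} (hf : Continuous f) (s : ℝ) :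
    BddAbove (Set.range fun u : Set.Icc (0:ℝ) s => f u.1) := by
  rcases le_or_gt 0 s with h | h
  · rw [← Set.image_eq_range]
    exact (isCompact_Icc.image_of_continuousOn hf.continuousOn).bddAbove
  · have he : Set.Icc (0:ℝ) s = ∅ := Set.Icc_eq_empty (by linarith)
    haveI : IsEmpty (Set.Icc (0:ℝ) s) := by rw [he]; exact Set.instIsEmptyElemEmptyCollection _
    rw [Set.range_eq_empty]
    exact bddAbove_empty

lemma bdd_clamp {f : ℝ → ℝ} (hf : Continuous f) {s : ℝ} (hs : 0 ≤ s) :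
    BddAbove (Set.range fun q : ℚ => f (max 0 (min s (q : ℝ)))) := by
  have hsub : (Set.range fun q : ℚ => f (max 0 (min s (q : ℝ))))
      ⊆ Set.range fun u : Set.Icc (0:ℝ) s => f u.1 := by
    rintro y ⟨q, rfl⟩
    exact ⟨⟨_, clamp_mem hs (q:ℝ)⟩, rfl⟩
  exact (bdd_icc hf s).mono hsub

lemma sup_clamp_eq {f : ℝ → ℝ} (hf : Continuous f) {s : ℝ} (hs : 0 ≤ s) :
    (⨆ u : Set.Icc (0:ℝ) s, f u.1) = ⨆ q : ℚ, f (max 0 (min s (q : ℝ))) := by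
  haveI : Nonempty (Set.Icc (0:ℝ) s) := ⟨⟨0, le_refl 0, hs⟩⟩
  apply le_antisymm
  · apply ciSup_le
    rintro ⟨u, hu⟩
    refine le_of_forall_pos_le_add fun ε hε => ?_
    obtain ⟨δ, hδ0, hδ⟩ := Metric.continuous_iff.mp hf u ε hε
    obtain ⟨q, hq⟩ := exists_rat_near u hδ0
    have hdist : dist (max 0 (min s (q:ℝ))) u < δ := by
      rw [Real.dist_eq]
      calc |max 0 (min s (q:ℝ)) - u| ≤ |(q:ℝ) - u| := clamp_dist hu (q:ℝ)
        _ = |u - q| := abs_sub_comm _ _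
        _ < δ := hq
    have := hδ _ hdist
    rw [Real.dist_eq] at this
    have hlt : f u < f (max 0 (min s (q:ℝ))) + ε := by
      have := abs_lt.mp this
      linarith [this.2]
    exact hlt.le.trans (add_le_add_left (le_ciSup (bdd_clamp hf hs) q) ε)
  · apply ciSup_le
    intro q
    exact le_ciSup (bdd_icc hf s) ⟨_, clamp_mem hs (q:ℝ)⟩

section BM

variable {Ω : Type*} [MeasurableSpace Ω] {P : Measure Ω} {n : ℕ} {V : ℝ → Ω → Euc n}

lemma meas_coord (hV : IsStdBrownianMotion P n V) (t : ℝ) (i : Fin n) :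
    Measurable fun ω => V t ω i := by
  have h : Measurable fun x : Euc n => x i :=
    (EuclideanSpace.proj (𝕜 := ℝ) (i : Fin n)).continuous.measurable
  exact h.comp (hV.meas t)

lemma Gnn (s : ℝ) (ω : Ω) : 0 ≤ ⨆ u : Set.Icc (0:ℝ) s, ‖V u.1 ω‖ :=
  Real.iSup_nonneg fun u => norm_nonneg _

lemma norm_le_G (hV : IsStdBrownianMotion P n V) {s u : ℝ} (hu : u ∈ Set.Icc (0:ℝ) s) (ω : Ω) :
    ‖V u ω‖ ≤ ⨆ u : Set.Icc (0:ℝ) s, ‖V u.1 ω‖ :=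
  le_ciSup (bdd_icc (hV.cont ω).norm s) (⟨u, hu⟩ : Set.Icc (0:ℝ) s)

lemma Gmono (hV : IsStdBrownianMotion P n V) {s₁ s₂ : ℝ} (h0 : 0 ≤ s₁) (h12 : s₁ ≤ s₂) (ω : Ω) :
    (⨆ u : Set.Icc (0:ℝ) s₁, ‖V u.1 ω‖) ≤ ⨆ u : Set.Icc (0:ℝ) s₂, ‖V u.1 ω‖ := by
  haveI : Nonempty (Set.Icc (0:ℝ) s₁) := ⟨⟨0, le_refl 0, h0⟩⟩
  exact ciSup_le fun u => norm_le_G hV ⟨u.2.1, u.2.2.trans h12⟩ ω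

lemma measurable_G (hV : IsStdBrownianMotion P n V) {s : ℝ} (hs : 0 ≤ s) :
    Measurable fun ω => ⨆ u : Set.Icc (0:ℝ) s, ‖V u.1 ω‖ := by
  have heq : (fun ω => ⨆ u : Set.Icc (0:ℝ) s, ‖V u.1 ω‖)
      = fun ω => ⨆ q : ℚ, ‖V (max 0 (min s (q:ℝ))) ω‖ :=
    funext fun ω => sup_clamp_eq (hV.cont ω).norm hs
  rw [heq]
  exact Measurable.iSup fun q => (hV.meas _).norm

lemma lintegral_G_lt_top (hV : IsStdBrownianMotion P n V) {s : ℝ} (hs : 0 ≤ s) :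
    ∫⁻ ω, ENNReal.ofReal (⨆ u : Set.Icc (0:ℝ) s, ‖V u.1 ω‖) ∂P < ⊤ := by
  haveI := hV.isProb
  rcases eq_or_lt_of_le hs with heq | hpos
  · -- s = 0
    have hs0 : s = 0 := heq.symm
    subst hs0
    have hzero : ∀ ω : Ω, (⨆ u : Set.Icc (0:ℝ) 0, ‖V u.1 ω‖) = 0 := by
      intro ω
      haveI : Nonempty (Set.Icc (0:ℝ) 0) := ⟨⟨0, le_refl 0, le_refl 0⟩⟩
      have h0 : ∀ u : Set.Icc (0:ℝ) 0, ‖V u.1 ω‖ = 0 := by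
        intro u
        have h1 : u.1 = 0 := le_antisymm u.2.2 u.2.1
        rw [h1, hV.init]
        simp
      rw [iSup_congr h0]
      exact ciSup_const
    simp only [hzero, ENNReal.ofReal_zero, lintegral_zero]
    exact ENNReal.zero_lt_top
  -- main case 0 < s
  set σ : ℕ → ℝ := fun j => Real.sqrt (s / 2^j) with hσ
  set aa : ℕ → ℝ := fun j => ((j:ℝ)+1) * σ j with haa
  have hσpos : ∀ j, 0 < σ j := fun j => Real.sqrt_pos.mpr (by positivity)
  have haapos : ∀ j, 0 < aa j := fun j =>
    mul_pos (by positivity) (hσpos j)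
  set D : ℕ → Ω → ℝ := fun j ω => (n:ℝ) * aa j + ∑ k ∈ Finset.range (2^j), ∑ i : Fin n,
      max (|V (((k:ℝ)+1) * s / 2^j) ω i - V ((k:ℝ) * s / 2^j) ω i| - aa j) 0 with hD
  have hσapp : ∀ j : ℕ, σ j = Real.sqrt (s / 2^j) := fun j => rfl
  have haaapp : ∀ j : ℕ, aa j = ((j:ℝ)+1) * σ j := fun j => rfl
  have hsum_nn : ∀ j (ω : Ω), 0 ≤ ∑ k ∈ Finset.range (2^j), ∑ i : Fin n,
      max (|V (((k:ℝ)+1) * s / 2^j) ω i - V ((k:ℝ) * s / 2^j) ω i| - aa j) 0 :=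
    fun j ω => Finset.sum_nonneg fun k _ => Finset.sum_nonneg fun i _ => le_max_right _ _
  have hD0 : ∀ j (ω : Ω), 0 ≤ D j ω := fun j ω =>
    add_nonneg (mul_nonneg (Nat.cast_nonneg n) (haapos j).le) (hsum_nn j ω)
  have hDmeas : ∀ j, Measurable fun ω => ENNReal.ofReal (D j ω) := by
    intro j
    apply Measurable.ennreal_ofReal
    apply Measurable.const_add
    apply Finset.measurable_sum
    intro k _
    apply Finset.measurable_sum
    intro i _
    exact (((meas_coord hV _ i).sub (meas_coord hV _ i)).abs.sub_const (aa j)).max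
      measurable_const
  have hptwise : ∀ ω : Ω, ENNReal.ofReal (⨆ u : Set.Icc (0:ℝ) s, ‖V u.1 ω‖)
      ≤ ∑' j, ENNReal.ofReal (D j ω) := by
    intro ω
    have hchain : ∀ u : Set.Icc (0:ℝ) s,
        ENNReal.ofReal ‖V u.1 ω‖ ≤ ∑' j, ENNReal.ofReal (D j ω) := by
      intro u
      have h0 : ‖V u.1 ω‖ = ‖V u.1 ω - V 0 ω‖ := by rw [hV.init]; simp
      rw [h0]
      refine dyadic_chain (hV.cont ω) hpos (fun j => hD0 j ω) ?_ u.2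
      intro j k hk
      have hcoord : ∀ i : Fin n,
          (V (((k:ℝ)+1) * s / 2^j) ω - V ((k:ℝ) * s / 2^j) ω) i
          = V (((k:ℝ)+1) * s / 2^j) ω i - V ((k:ℝ) * s / 2^j) ω i := fun i => rfl
      calc ‖V (((k:ℝ)+1) * s / 2^j) ω - V ((k:ℝ) * s / 2^j) ω‖
          ≤ ∑ i : Fin n, |(V (((k:ℝ)+1) * s / 2^j) ω - V ((k:ℝ) * s / 2^j) ω) i| :=
            euc_norm_le_sum_abs _
        _ = ∑ i : Fin n, |V (((k:ℝ)+1) * s / 2^j) ω i - V ((k:ℝ) * s / 2^j) ω i| := by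
            simp only [hcoord]
        _ ≤ ∑ i : Fin n, (aa j +
              max (|V (((k:ℝ)+1) * s / 2^j) ω i - V ((k:ℝ) * s / 2^j) ω i| - aa j) 0) := by
            apply Finset.sum_le_sum
            intro i _
            have h1 : |V (((k:ℝ)+1) * s / 2^j) ω i - V ((k:ℝ) * s / 2^j) ω i| - aa j
                ≤ max (|V (((k:ℝ)+1) * s / 2^j) ω i - V ((k:ℝ) * s / 2^j) ω i| - aa j) 0 :=
              le_max_left _ _
            linarith
        _ = (n:ℝ) * aa j + ∑ i : Fin n,
              max (|V (((k:ℝ)+1) * s / 2^j) ω i - V ((k:ℝ) * s / 2^j) ω i| - aa j) 0 := by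
            rw [Finset.sum_add_distrib, Finset.sum_const, Finset.card_univ, Fintype.card_fin,
              nsmul_eq_mul]
        _ ≤ D j ω := by
            rw [hD]
            apply add_le_add_right
            have hsl := Finset.single_le_sum
              (f := fun k : ℕ => ∑ i : Fin n,
                max (|V (((k:ℝ)+1) * s / 2^j) ω i - V ((k:ℝ) * s / 2^j) ω i| - aa j) 0)
              (s := Finset.range (2^j))
              (fun k _ => Finset.sum_nonneg fun i _ => le_max_right _ _)
              (Finset.mem_range.mpr hk)
            exact hsl
    by_cases hS : (∑' j, ENNReal.ofReal (D j ω)) = ⊤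
    · rw [hS]; exact le_top
    · haveI : Nonempty (Set.Icc (0:ℝ) s) := ⟨⟨0, le_refl 0, hs⟩⟩
      rw [ENNReal.ofReal_le_iff_le_toReal hS]
      exact ciSup_le fun u => (ENNReal.ofReal_le_iff_le_toReal hS).mp (hchain u)
  have hlevel : ∀ j : ℕ, ∫⁻ ω, ENNReal.ofReal (D j ω) ∂P
      ≤ ENNReal.ofReal ((n:ℝ) * aa j
        + (2^j * n : ℕ) * (2 * σ j * Real.exp (-((j:ℝ)+1)^2/2))) := by
    intro j
    have hvar : ∀ k ∈ Finset.range (2^j), ∀ i : Fin n,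
        ∫⁻ ω, ENNReal.ofReal
          (max (|V (((k:ℝ)+1) * s / 2^j) ω i - V ((k:ℝ) * s / 2^j) ω i| - aa j) 0) ∂P
        ≤ ENNReal.ofReal (2 * σ j * Real.exp (-((j:ℝ)+1)^2/2)) := by
      intro k _ i
      have h1 : (0:ℝ) ≤ (k:ℝ) * s / 2^j := by positivity
      have h2 : (k:ℝ) * s / 2^j ≤ ((k:ℝ)+1) * s / 2^j := by
        apply div_le_div_of_nonneg_right ?_ (by positivity)
        nlinarith [hpos]
      have hXmeas : Measurable fun ω =>
          V (((k:ℝ)+1) * s / 2^j) ω i - V ((k:ℝ) * s / 2^j) ω i :=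
        (meas_coord hV _ i).sub (meas_coord hV _ i)
      have hmap := hV.gauss _ _ h1 h2 i
      have htail := gauss_tail P _ hXmeas _ hmap (haapos j)
      have hvv : ((k:ℝ)+1) * s / 2^j - (k:ℝ) * s / 2^j = s / 2^j := by ring
      rw [hvv] at htail
      refine htail.trans (ENNReal.ofReal_le_ofReal ?_)
      have hcoe : ((Real.toNNReal (s / 2^j) : ℝ≥0) : ℝ) = s / 2^j :=
        Real.coe_toNNReal _ (by positivity)
      rw [hcoe]
      have hsq : σ j ^ 2 = s / 2^j := Real.sq_sqrt (by positivity)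
      have hexp : -(aa j)^2 / (2 * (s / 2^j)) = -((j:ℝ)+1)^2/2 := by
        rw [haaapp j, ← hsq]
        have hσne := (hσpos j).ne'
        field_simp
      rw [hexp]
    have hsplit : ∀ ω : Ω, ENNReal.ofReal (D j ω) = ENNReal.ofReal ((n:ℝ) * aa j)
        + ∑ k ∈ Finset.range (2^j), ∑ i : Fin n, ENNReal.ofReal
          (max (|V (((k:ℝ)+1) * s / 2^j) ω i - V ((k:ℝ) * s / 2^j) ω i| - aa j) 0) := by
      intro ω
      rw [hD, ENNReal.ofReal_add (mul_nonneg (Nat.cast_nonneg n) (haapos j).le) (hsum_nn j ω),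
        ENNReal.ofReal_sum_of_nonneg
          (fun k _ => Finset.sum_nonneg fun i _ => le_max_right _ _)]
      congr 1
      refine Finset.sum_congr rfl fun k _ => ?_
      rw [ENNReal.ofReal_sum_of_nonneg (fun i _ => le_max_right _ _)]
    calc ∫⁻ ω, ENNReal.ofReal (D j ω) ∂P
        = ENNReal.ofReal ((n:ℝ) * aa j)
          + ∑ k ∈ Finset.range (2^j), ∑ i : Fin n, ∫⁻ ω, ENNReal.ofReal
            (max (|V (((k:ℝ)+1) * s / 2^j) ω i - V ((k:ℝ) * s / 2^j) ω i| - aa j) 0) ∂P := by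
          rw [lintegral_congr hsplit, lintegral_add_left measurable_const, lintegral_const,
            measure_univ, mul_one]
          congr 1
          rw [lintegral_finset_sum]
          · exact Finset.sum_congr rfl fun k _ => lintegral_finset_sum _ fun i _ =>
              (((meas_coord hV _ i).sub (meas_coord hV _ i)).abs.sub_const (aa j)).max
                measurable_const |>.ennreal_ofReal
          · intro k _
            exact Finset.measurable_sum _ fun i _ =>
              (((meas_coord hV _ i).sub (meas_coord hV _ i)).abs.sub_const (aa j)).max
                measurable_const |>.ennreal_ofReal
      _ ≤ ENNReal.ofReal ((n:ℝ) * aa j)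
          + ∑ k ∈ Finset.range (2^j), ∑ i : Fin n,
            ENNReal.ofReal (2 * σ j * Real.exp (-((j:ℝ)+1)^2/2)) := by
          apply add_le_add_right
          exact Finset.sum_le_sum fun k hk => Finset.sum_le_sum fun i _ => hvar k hk i
      _ = ENNReal.ofReal ((n:ℝ) * aa j)
          + (2^j * n : ℕ) * ENNReal.ofReal (2 * σ j * Real.exp (-((j:ℝ)+1)^2/2)) := by
          congr 1
          simp only [Finset.sum_const, Finset.card_univ, Fintype.card_fin, Finset.card_range,
            smul_smul, nsmul_eq_mul]
          push_cast
          ring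
      _ = ENNReal.ofReal ((n:ℝ) * aa j
          + (2^j * n : ℕ) * (2 * σ j * Real.exp (-((j:ℝ)+1)^2/2))) := by
          have hc0 : (0:ℝ) ≤ 2 * σ j * Real.exp (-((j:ℝ)+1)^2/2) := by
            have := (hσpos j).le
            positivity
          rw [ENNReal.ofReal_add (mul_nonneg (Nat.cast_nonneg n) (haapos j).le)
            (mul_nonneg (Nat.cast_nonneg _) hc0)]
          congr 1
          rw [ENNReal.ofReal_mul (Nat.cast_nonneg _), ENNReal.ofReal_natCast]
  calc ∫⁻ ω, ENNReal.ofReal (⨆ u : Set.Icc (0:ℝ) s, ‖V u.1 ω‖) ∂P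
      ≤ ∫⁻ ω, ∑' j, ENNReal.ofReal (D j ω) ∂P := lintegral_mono hptwise
    _ = ∑' j, ∫⁻ ω, ENNReal.ofReal (D j ω) ∂P :=
        lintegral_tsum fun j => (hDmeas j).aemeasurable
    _ ≤ ∑' j, ENNReal.ofReal ((n:ℝ) * aa j
          + (2^j * n : ℕ) * (2 * σ j * Real.exp (-((j:ℝ)+1)^2/2))) :=
        ENNReal.tsum_le_tsum hlevel
    _ < ⊤ := by
        set B : ℕ → ℝ := fun j => (n:ℝ) * aa j
          + (2^j * n : ℕ) * (2 * σ j * Real.exp (-((j:ℝ)+1)^2/2)) with hB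
        have hBnn : ∀ j, 0 ≤ B j := by
          intro j
          have h1 := (hσpos j).le
          have h2 := (haapos j).le
          rw [hB]
          positivity
        set r : ℝ := Real.sqrt (1/2) with hr
        have hr0 : 0 ≤ r := Real.sqrt_nonneg _
        have hr1 : r < 1 := by
          rw [hr]
          rw [show (1:ℝ) = Real.sqrt 1 from (Real.sqrt_one).symm]
          exact Real.sqrt_lt_sqrt (by norm_num) (by norm_num)
        have hσ_eq : ∀ j : ℕ, σ j = Real.sqrt s * r ^ j := by
          intro j
          rw [hσapp j, show s / 2^j = s * (1/2:ℝ)^j by rw [div_pow, one_pow, mul_one_div],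
            Real.sqrt_mul hpos.le, sqrt_pow_eq (by norm_num), hr]
        have hsummable : Summable B := by
          have hbase1 : Summable (fun j : ℕ => ((j:ℝ)+1) * r^j) := by
            have h1 : Summable (fun j : ℕ => (j:ℝ) * r^j) := by
              have := summable_pow_mul_geometric_of_norm_lt_one (R := ℝ) 1 (r := r)
                (by rw [Real.norm_eq_abs, abs_of_nonneg hr0]; exact hr1)
              simpa using this
            have h2 : Summable (fun j : ℕ => r^j) := summable_geometric_of_lt_one hr0 hr1
            exact (h1.add h2).congr fun j => by ring
          have hS1 : Summable (fun j : ℕ => (n:ℝ) * aa j) := by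
            refine (hbase1.mul_left ((n:ℝ) * Real.sqrt s)).congr fun j => ?_
            rw [haaapp j, hσ_eq j]
            ring
          have h2r : 2 * r = Real.sqrt 2 := by
            have hsq2 : (2 * r)^2 = 2 := by
              rw [mul_pow, hr, Real.sq_sqrt (by norm_num : (0:ℝ) ≤ 1/2)]
              norm_num
            have h' : Real.sqrt ((2*r)^2) = 2*r := Real.sqrt_sq (by positivity)
            rw [← h', hsq2]
          have hs2 : Real.sqrt 2 ≤ Real.exp (1/2) := by
            have he : Real.sqrt (Real.exp 1) = Real.exp (1/2) := by
              rw [show Real.exp 1 = Real.exp (1/2) ^ 2 by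
                rw [sq, ← Real.exp_add]; norm_num]
              exact Real.sqrt_sq (Real.exp_pos _).le
            rw [← he]
            exact Real.sqrt_le_sqrt (by linarith [Real.add_one_le_exp (1:ℝ)])
          have hterm : ∀ j : ℕ, (Real.sqrt 2)^j * Real.exp (-((j:ℝ)+1)^2/2)
              ≤ (Real.exp (-1))^j := by
            intro j
            have h1 : (Real.sqrt 2)^j ≤ Real.exp ((j:ℝ) * (1/2)) := by
              calc (Real.sqrt 2)^j ≤ (Real.exp (1/2))^j :=
                    pow_le_pow_left₀ (Real.sqrt_nonneg 2) hs2 j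
                _ = Real.exp ((j:ℝ) * (1/2)) := by rw [← Real.exp_nat_mul]
            calc (Real.sqrt 2)^j * Real.exp (-((j:ℝ)+1)^2/2)
                ≤ Real.exp ((j:ℝ) * (1/2)) * Real.exp (-((j:ℝ)+1)^2/2) :=
                  mul_le_mul_of_nonneg_right h1 (Real.exp_pos _).le
              _ = Real.exp ((j:ℝ) * (1/2) + -((j:ℝ)+1)^2/2) := (Real.exp_add _ _).symm
              _ ≤ Real.exp (-(j:ℝ)) := Real.exp_le_exp.mpr (by nlinarith [sq_nonneg ((j:ℝ))])
              _ = (Real.exp (-1))^j := by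
                  rw [← Real.exp_nat_mul]
                  congr 1
                  ring
          have hgeo : Summable (fun j : ℕ => (Real.exp (-1))^j) :=
            summable_geometric_of_lt_one (Real.exp_pos _).le
              (Real.exp_lt_one_iff.mpr (by norm_num))
          have hbase2 : Summable (fun j : ℕ => (Real.sqrt 2)^j * Real.exp (-((j:ℝ)+1)^2/2)) :=
            Summable.of_nonneg_of_le (fun j => by positivity) hterm hgeo
          have hS2 : Summable (fun j : ℕ =>
              ((2^j * n : ℕ) : ℝ) * (2 * σ j * Real.exp (-((j:ℝ)+1)^2/2))) := by
            refine (hbase2.mul_left (2 * (n:ℝ) * Real.sqrt s)).congr fun j => ?_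
            rw [hσ_eq j, ← h2r]
            push_cast
            ring
          exact (hS1.add hS2).congr fun j => rfl
        have hfin : (∑' j, ENNReal.ofReal (B j)) < ⊤ := by
          rw [← ENNReal.ofReal_tsum_of_nonneg hBnn hsummable]
          exact ENNReal.ofReal_lt_top
        exact hfin

lemma integrable_G (hV : IsStdBrownianMotion P n V) {s : ℝ} (hs : 0 ≤ s) :
    Integrable (fun ω => ⨆ u : Set.Icc (0:ℝ) s, ‖V u.1 ω‖) P := by
  refine ⟨(measurable_G hV hs).aestronglyMeasurable, ?_⟩
  rw [hasFiniteIntegral_iff_norm]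
  have heq : ∀ ω : Ω, ENNReal.ofReal ‖⨆ u : Set.Icc (0:ℝ) s, ‖V u.1 ω‖‖
      = ENNReal.ofReal (⨆ u : Set.Icc (0:ℝ) s, ‖V u.1 ω‖) := fun ω => by
    rw [Real.norm_eq_abs, abs_of_nonneg (Gnn s ω)]
  rw [lintegral_congr heq]
  exact lintegral_G_lt_top hV hs

end BM

lemma op_bound {n : ℕ} (A R : Mat n) {δ : ℝ} (hδ0 : 0 < δ) (s : ℝ) :
    ‖(NormedSpace.exp ((s - δ * ↑⌊s / δ⌋) • A) - 1) * R‖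
      ≤ δ * ‖A‖ * Real.exp (δ * ‖A‖) * ‖R‖ := by
  set τ : ℝ := s - δ * ↑⌊s / δ⌋ with hτ
  have hτ0 : 0 ≤ τ := by
    have := Int.sub_floor_div_mul_nonneg s hδ0
    rw [hτ]
    linarith [this]
  have hτδ : τ ≤ δ := by
    have := Int.sub_floor_div_mul_lt s hδ0
    rw [hτ]
    linarith [this]
  have hsm : ‖τ • A‖ = τ * ‖A‖ := by
    rw [norm_smul τ A, Real.norm_eq_abs, abs_of_nonneg hτ0]
  have h1 : ‖NormedSpace.exp (τ • A) - 1‖ ≤ τ * ‖A‖ * Real.exp (τ * ‖A‖) := by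
    have := exp_sub_one_norm_le (τ • A)
    rwa [hsm] at this
  have h2 : τ * ‖A‖ ≤ δ * ‖A‖ := mul_le_mul_of_nonneg_right hτδ (norm_nonneg A)
  have h3 : τ * ‖A‖ * Real.exp (τ * ‖A‖) ≤ δ * ‖A‖ * Real.exp (δ * ‖A‖) :=
    mul_le_mul h2 (Real.exp_le_exp.mpr h2) (Real.exp_pos _).le (by positivity)
  calc ‖(NormedSpace.exp (τ • A) - 1) * R‖
      ≤ ‖NormedSpace.exp (τ • A) - 1‖ * ‖R‖ := norm_mul_le _ _
    _ ≤ δ * ‖A‖ * Real.exp (δ * ‖A‖) * ‖R‖ :=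
        mul_le_mul_of_nonneg_right (h1.trans h3) (norm_nonneg R)

/-- `E[sup_{0≤t≤T}|L₃(t)|] ≤ δ|A|e^{δ|A|}|A⁻¹BK| ∫_0^T E[sup_{0≤u≤s}|V_u|] ds
≤ δ|A|e^{|A|}|A⁻¹BK| Λ √n T^{3/2}`. -/
theorem L3_bound {Ω : Type*} [MeasurableSpace Ω]
    (P : Measure Ω) (n m : ℕ) (V : ℝ → Ω → Euc n) (hV : IsStdBrownianMotion P n V)
    (A : Mat n) (hA : IsUnit A) (B : Euc m →L[ℝ] Euc n) (K : Euc n →L[ℝ] Euc m)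
    (δ ε : ℝ) (hδ : δ ∈ Set.Ioo (0:ℝ) 1) (hε : ε ∈ Set.Ioo (0:ℝ) 1)
    (T : ℝ) (hT : 0 < T) (Λ : ℝ) (hΛpos : 0 < Λ)
    (hΛ : ∀ s ≥ (0:ℝ), (∫ ω, (⨆ u : Set.Icc (0:ℝ) s, ‖V u.1 ω‖) ∂P) ≤
      Λ * Real.sqrt (n * s)) :
    (∫ ω, (⨆ t : Set.Icc (0:ℝ) T,
        ‖-∫ s in (0:ℝ)..t.1,
            ((NormedSpace.exp ((s - δ * ↑⌊s / δ⌋) • A) - 1) *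
              (Ring.inverse A * (B ∘L K))) (V (δ * ↑⌊s / δ⌋) ω)‖) ∂P) ≤
      δ * ‖A‖ * Real.exp (δ * ‖A‖) * ‖Ring.inverse A * (B ∘L K)‖ *
        (∫ s in (0:ℝ)..T, ∫ ω, (⨆ u : Set.Icc (0:ℝ) s, ‖V u.1 ω‖) ∂P) ∧
    δ * ‖A‖ * Real.exp (δ * ‖A‖) * ‖Ring.inverse A * (B ∘L K)‖ *
        (∫ s in (0:ℝ)..T, ∫ ω, (⨆ u : Set.Icc (0:ℝ) s, ‖V u.1 ω‖) ∂P) ≤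
      δ * ‖A‖ * Real.exp ‖A‖ * ‖Ring.inverse A * (B ∘L K)‖ * Λ * Real.sqrt n *
        T ^ ((3:ℝ) / 2) := by
  obtain ⟨hδ0, hδ1⟩ := hδ
  haveI := hV.isProb
  set R : Mat n := Ring.inverse A * (B ∘L K) with hR
  set C : ℝ := δ * ‖A‖ * Real.exp (δ * ‖A‖) * ‖R‖ with hC
  have hC0 : 0 ≤ C := by positivity
  -- notation for the running supremum
  set G : ℝ → Ω → ℝ := fun s ω => ⨆ u : Set.Icc (0:ℝ) s, ‖V u.1 ω‖ with hG
  have hGapp : ∀ (s : ℝ) (ω : Ω), G s ω = ⨆ u : Set.Icc (0:ℝ) s, ‖V u.1 ω‖ := fun s ω => rfl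
  -- facts about π_δ
  have hπ : ∀ s : ℝ, 0 ≤ s → δ * ↑⌊s / δ⌋ ∈ Set.Icc 0 s := by
    intro s hs
    constructor
    · have h1 : (0:ℤ) ≤ ⌊s / δ⌋ := Int.floor_nonneg.mpr (div_nonneg hs hδ0.le)
      have h2 : (0:ℝ) ≤ (⌊s / δ⌋ : ℝ) := by exact_mod_cast h1
      exact mul_nonneg hδ0.le h2
    · have h1 : (⌊s / δ⌋ : ℝ) ≤ s / δ := Int.floor_le _
      calc δ * (⌊s / δ⌋ : ℝ) ≤ δ * (s / δ) := mul_le_mul_of_nonneg_left h1 hδ0.le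
        _ = s := by field_simp
  -- pointwise norm bound on the integrand
  have hnormle : ∀ (ω : Ω) (s : ℝ), 0 ≤ s →
      ‖((NormedSpace.exp ((s - δ * ↑⌊s / δ⌋) • A) - 1) * R) (V (δ * ↑⌊s / δ⌋) ω)‖
        ≤ C * G s ω := by
    intro ω s hs
    calc ‖((NormedSpace.exp ((s - δ * ↑⌊s / δ⌋) • A) - 1) * R) (V (δ * ↑⌊s / δ⌋) ω)‖
        ≤ ‖(NormedSpace.exp ((s - δ * ↑⌊s / δ⌋) • A) - 1) * R‖ * ‖V (δ * ↑⌊s / δ⌋) ω‖ :=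
          ContinuousLinearMap.le_opNorm _ _
      _ ≤ C * G s ω :=
          mul_le_mul (op_bound A R hδ0 s) (norm_le_G hV (hπ s hs) ω) (norm_nonneg _) hC0
  -- measurability in s of the integrand, for fixed ω
  have hΦmeas : ∀ ω : Ω, Measurable fun s : ℝ =>
      ((NormedSpace.exp ((s - δ * ↑⌊s / δ⌋) • A) - 1) * R) (V (δ * ↑⌊s / δ⌋) ω) := by
    intro ω
    have hfl : Measurable fun s : ℝ => δ * ((⌊s / δ⌋ : ℤ) : ℝ) := by
      have h1 : Measurable fun s : ℝ => (⌊s / δ⌋ : ℤ) :=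
        Int.measurable_floor.comp (measurable_id.div_const δ)
      have h2 : Measurable fun k : ℤ => ((k : ℝ)) := measurable_from_top
      exact measurable_const.mul (h2.comp h1)
    letI : NormedAlgebra ℚ (Mat n) := NormedAlgebra.restrictScalars ℚ ℝ (Mat n)
    have hMc : Continuous fun τ : ℝ => (NormedSpace.exp (τ • A) - 1) * R :=
      ((NormedSpace.exp_continuous.comp (continuous_id.smul continuous_const)).sub
        continuous_const).mul continuous_const
    have hM : Measurable fun s : ℝ => (NormedSpace.exp ((s - δ * ↑⌊s / δ⌋) • A) - 1) * R :=
      hMc.measurable.comp (measurable_id.sub hfl)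
    have hv : Measurable fun s : ℝ => V (δ * ↑⌊s / δ⌋) ω := (hV.cont ω).measurable.comp hfl
    have happly : Continuous fun p : Mat n × Euc n => p.1 p.2 :=
      isBoundedBilinearMap_apply.continuous
    exact happly.measurable.comp (hM.prodMk hv)
  -- interval integrability of s ↦ G s ω on [0,t]
  have hGint : ∀ (ω : Ω) (t : ℝ), t ∈ Set.Icc (0:ℝ) T →
      IntervalIntegrable (fun s => G s ω) volume 0 t := by
    intro ω t ht
    apply MonotoneOn.intervalIntegrable
    rw [Set.uIcc_of_le ht.1]
    intro s1 h1 s2 _ h12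
    exact Gmono hV h1.1 h12 ω
  -- interval integrability of the integrand on [0,t]
  have hΦint : ∀ (ω : Ω) (t : ℝ), t ∈ Set.Icc (0:ℝ) T →
      IntervalIntegrable (fun s =>
        ((NormedSpace.exp ((s - δ * ↑⌊s / δ⌋) • A) - 1) * R) (V (δ * ↑⌊s / δ⌋) ω))
        volume 0 t := by
    intro ω t ht
    rw [intervalIntegrable_iff_integrableOn_Ioc_of_le ht.1]
    apply Integrable.mono' (g := fun _ : ℝ => C * G T ω)
      (integrableOn_const measure_Ioc_lt_top.ne)
      ((hΦmeas ω).aestronglyMeasurable.restrict)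
    refine (ae_restrict_iff' measurableSet_Ioc).mpr (Filter.Eventually.of_forall fun s hs => ?_)
    refine (hnormle ω s hs.1.le).trans ?_
    exact mul_le_mul_of_nonneg_left (Gmono hV hs.1.le (hs.2.trans ht.2) ω) hC0
  -- pointwise bound on the supremum
  have hkey : ∀ ω : Ω, (⨆ t : Set.Icc (0:ℝ) T,
      ‖-∫ s in (0:ℝ)..t.1,
          ((NormedSpace.exp ((s - δ * ↑⌊s / δ⌋) • A) - 1) * R) (V (δ * ↑⌊s / δ⌋) ω)‖)
      ≤ C * ∫ s in (0:ℝ)..T, G s ω := by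
    intro ω
    haveI : Nonempty (Set.Icc (0:ℝ) T) := ⟨⟨0, le_refl 0, hT.le⟩⟩
    apply ciSup_le
    rintro ⟨t, ht⟩
    rw [norm_neg]
    calc ‖∫ s in (0:ℝ)..t,
          ((NormedSpace.exp ((s - δ * ↑⌊s / δ⌋) • A) - 1) * R) (V (δ * ↑⌊s / δ⌋) ω)‖
        ≤ ∫ s in (0:ℝ)..t,
            ‖((NormedSpace.exp ((s - δ * ↑⌊s / δ⌋) • A) - 1) * R) (V (δ * ↑⌊s / δ⌋) ω)‖ :=
          intervalIntegral.norm_integral_le_integral_norm ht.1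
      _ ≤ ∫ s in (0:ℝ)..t, C * G s ω := by
          apply intervalIntegral.integral_mono_on ht.1 ((hΦint ω t ht).norm)
            ((hGint ω t ht).const_mul C)
          intro s hs
          exact hnormle ω s hs.1
      _ = C * ∫ s in (0:ℝ)..t, G s ω := intervalIntegral.integral_const_mul C _
      _ ≤ C * ∫ s in (0:ℝ)..T, G s ω := by
          apply mul_le_mul_of_nonneg_left ?_ hC0
          apply intervalIntegral.integral_mono_interval (le_refl (0:ℝ)) ht.1 ht.2
          · exact Filter.Eventually.of_forall fun s => Gnn s ω
          · exact hGint ω T ⟨hT.le, le_refl T⟩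
  -- joint measurability and product integrability of G
  have hjm : Measurable (Function.uncurry fun (s : ℝ) (ω : Ω) =>
      ⨆ q : ℚ, ‖V (max 0 (min s (q:ℝ))) ω‖) := by
    apply Measurable.iSup
    intro q
    exact measurable_uncurry_of_continuous_of_measurable
      (u := fun (s : ℝ) (ω : Ω) => ‖V (max 0 (min s (q:ℝ))) ω‖)
      (fun ω => ((hV.cont ω).comp
        (continuous_const.max (continuous_id.min continuous_const))).norm)
      (fun s => (hV.meas _).norm)
  have hae : ∀ᵐ p ∂((volume.restrict (Set.Ioc (0:ℝ) T)).prod P), 0 ≤ p.1 := by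
    rw [ae_iff]
    have hcompl : {p : ℝ × Ω | ¬ 0 ≤ p.1}
        = {s : ℝ | ¬ 0 ≤ s} ×ˢ (Set.univ : Set Ω) := by
      ext p; simp [Set.mem_prod]
    have hzero : (volume.restrict (Set.Ioc (0:ℝ) T)) {s : ℝ | ¬ 0 ≤ s} = 0 := by
      have h1 : {s : ℝ | ¬ 0 ≤ s} = Set.Iio 0 := by ext x; simp [not_le]
      rw [h1, Measure.restrict_apply measurableSet_Iio]
      have h2 : Set.Iio (0:ℝ) ∩ Set.Ioc 0 T = ∅ := by
        ext x
        simp only [Set.mem_inter_iff, Set.mem_Iio, Set.mem_Ioc, Set.mem_empty_iff_false,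
          iff_false, not_and]
        intro hx h0
        linarith
      rw [h2]
      exact measure_empty
    rw [hcompl, Measure.prod_prod, hzero, zero_mul]
  have hGcongr : (Function.uncurry fun (s : ℝ) (ω : Ω) => G s ω)
      =ᵐ[(volume.restrict (Set.Ioc (0:ℝ) T)).prod P]
      (Function.uncurry fun (s : ℝ) (ω : Ω) => ⨆ q : ℚ, ‖V (max 0 (min s (q:ℝ))) ω‖) := by
    filter_upwards [hae] with p hp
    exact sup_clamp_eq ((hV.cont p.2).norm) hp
  have hGprod : Integrable (Function.uncurry fun (s : ℝ) (ω : Ω) => G s ω)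
      ((volume.restrict (Set.Ioc (0:ℝ) T)).prod P) := by
    refine ⟨hjm.aestronglyMeasurable.congr hGcongr.symm, ?_⟩
    rw [hasFiniteIntegral_iff_norm]
    have heqn : ∀ p : ℝ × Ω,
        ENNReal.ofReal ‖(Function.uncurry fun (s : ℝ) (ω : Ω) => G s ω) p‖
        = ENNReal.ofReal (G p.1 p.2) := fun p => by
      show ENNReal.ofReal ‖G p.1 p.2‖ = ENNReal.ofReal (G p.1 p.2)
      rw [Real.norm_eq_abs, abs_of_nonneg (Gnn p.1 p.2)]
    rw [lintegral_congr heqn]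
    have haem : AEMeasurable (fun p : ℝ × Ω => ENNReal.ofReal (G p.1 p.2))
        ((volume.restrict (Set.Ioc (0:ℝ) T)).prod P) :=
      ((hjm.aestronglyMeasurable.congr hGcongr.symm).aemeasurable).ennreal_ofReal
    rw [MeasureTheory.lintegral_prod _ haem]
    have hbound : ∀ᵐ s ∂(volume.restrict (Set.Ioc (0:ℝ) T)),
        (∫⁻ ω, ENNReal.ofReal (G s ω) ∂P) ≤ ∫⁻ ω, ENNReal.ofReal (G T ω) ∂P := by
      filter_upwards [ae_restrict_mem measurableSet_Ioc] with s hs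
      exact lintegral_mono fun ω => ENNReal.ofReal_le_ofReal (Gmono hV hs.1.le hs.2 ω)
    calc ∫⁻ s in Set.Ioc (0:ℝ) T, ∫⁻ ω, ENNReal.ofReal (G s ω) ∂P ∂volume
        ≤ ∫⁻ _ in Set.Ioc (0:ℝ) T, (∫⁻ ω, ENNReal.ofReal (G T ω) ∂P) ∂volume :=
          lintegral_mono_ae hbound
      _ = (∫⁻ ω, ENNReal.ofReal (G T ω) ∂P) * volume (Set.Ioc (0:ℝ) T) :=
          setLIntegral_const _ _
      _ < ⊤ := ENNReal.mul_lt_top (lintegral_G_lt_top hV hT.le) measure_Ioc_lt_top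
  have hswap := MeasureTheory.integral_integral_swap (f := fun (s : ℝ) (ω : Ω) => G s ω)
    (μ := volume.restrict (Set.Ioc (0:ℝ) T)) (ν := P) hGprod
  have hmargInt : Integrable (fun ω => ∫ s in Set.Ioc (0:ℝ) T, G s ω ∂volume) P :=
    hGprod.integral_prod_right
  have hIocInterval : ∀ ω : Ω, (∫ s in (0:ℝ)..T, G s ω)
      = ∫ s in Set.Ioc (0:ℝ) T, G s ω ∂volume := fun ω => intervalIntegral.integral_of_le hT.le
  constructor
  · -- first inequality
    calc (∫ ω, (⨆ t : Set.Icc (0:ℝ) T,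
          ‖-∫ s in (0:ℝ)..t.1,
              ((NormedSpace.exp ((s - δ * ↑⌊s / δ⌋) • A) - 1) * R) (V (δ * ↑⌊s / δ⌋) ω)‖) ∂P)
        ≤ ∫ ω, C * ∫ s in Set.Ioc (0:ℝ) T, G s ω ∂volume ∂P := by
          apply integral_mono_of_nonneg
          · exact Filter.Eventually.of_forall fun ω => Real.iSup_nonneg fun t => norm_nonneg _
          · exact hmargInt.const_mul C
          · refine Filter.Eventually.of_forall fun ω => ?_
            have hk := hkey ω
            rw [hIocInterval ω] at hk
            exact hk
      _ = C * ∫ ω, (∫ s in Set.Ioc (0:ℝ) T, G s ω ∂volume) ∂P := integral_const_mul C _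
      _ = C * ∫ s in (0:ℝ)..T, ∫ ω, G s ω ∂P := by
          rw [← hswap, intervalIntegral.integral_of_le hT.le]
  · -- second inequality
    have hEmono : IntervalIntegrable (fun s => ∫ ω, G s ω ∂P) volume 0 T := by
      apply MonotoneOn.intervalIntegrable
      rw [Set.uIcc_of_le hT.le]
      intro s1 h1 s2 _ h12
      exact integral_mono (integrable_G hV h1.1) (integrable_G hV (h1.1.trans h12))
        (fun ω => Gmono hV h1.1 h12 ω)
    have hsqint : IntervalIntegrable (fun s : ℝ => Λ * (Real.sqrt n * Real.sqrt s)) volume 0 T :=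
      (continuous_const.mul (continuous_const.mul Real.continuous_sqrt)).intervalIntegrable 0 T
    have hK : ∀ s ∈ Set.Icc (0:ℝ) T, (∫ ω, G s ω ∂P) ≤ Λ * (Real.sqrt n * Real.sqrt s) := by
      intro s hs
      have := hΛ s hs.1
      rwa [Real.sqrt_mul (Nat.cast_nonneg n) s] at this
    have hsqrt_val : (∫ s in (0:ℝ)..T, Real.sqrt s) = 2/3 * T ^ ((3:ℝ)/2) := by
      have h1 : (∫ s in (0:ℝ)..T, Real.sqrt s) = ∫ s in (0:ℝ)..T, s ^ ((1:ℝ)/2) := by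
        apply intervalIntegral.integral_congr
        intro s _
        exact Real.sqrt_eq_rpow s
      rw [h1, integral_rpow (Or.inl (by norm_num))]
      rw [Real.zero_rpow (by norm_num)]
      norm_num
      ring
    have hIle : (∫ s in (0:ℝ)..T, ∫ ω, G s ω ∂P)
        ≤ Λ * Real.sqrt n * (2/3 * T ^ ((3:ℝ)/2)) := by
      calc (∫ s in (0:ℝ)..T, ∫ ω, G s ω ∂P)
          ≤ ∫ s in (0:ℝ)..T, Λ * (Real.sqrt n * Real.sqrt s) :=
            intervalIntegral.integral_mono_on hT.le hEmono hsqint hK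
        _ = Λ * Real.sqrt n * ∫ s in (0:ℝ)..T, Real.sqrt s := by
            rw [← intervalIntegral.integral_const_mul]
            apply intervalIntegral.integral_congr
            intro s _
            ring
        _ = Λ * Real.sqrt n * (2/3 * T ^ ((3:ℝ)/2)) := by rw [hsqrt_val]
    have hCle : C ≤ δ * ‖A‖ * Real.exp ‖A‖ * ‖R‖ := by
      rw [hC]
      have h1 : Real.exp (δ * ‖A‖) ≤ Real.exp ‖A‖ :=
        Real.exp_le_exp.mpr (mul_le_of_le_one_left (norm_nonneg A) hδ1.le)
      gcongr
    have hInn : 0 ≤ (∫ s in (0:ℝ)..T, ∫ ω, G s ω ∂P) := by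
      rw [intervalIntegral.integral_of_le hT.le]
      apply setIntegral_nonneg measurableSet_Ioc
      intro s _
      exact integral_nonneg fun ω => Gnn s ω
    calc C * (∫ s in (0:ℝ)..T, ∫ ω, G s ω ∂P)
        ≤ C * (Λ * Real.sqrt n * (2/3 * T ^ ((3:ℝ)/2))) :=
          mul_le_mul_of_nonneg_left hIle hC0
      _ ≤ (δ * ‖A‖ * Real.exp ‖A‖ * ‖R‖) * (Λ * Real.sqrt n * T ^ ((3:ℝ)/2)) := by
          apply mul_le_mul hCle ?_ ?_ (by positivity)
          · nlinarith [Real.rpow_nonneg hT.le ((3:ℝ)/2), Real.sqrt_nonneg (n:ℝ), hΛpos.le,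
              mul_nonneg (Real.sqrt_nonneg (n:ℝ)) (Real.rpow_nonneg hT.le ((3:ℝ)/2))]
          · positivity
      _ = δ * ‖A‖ * Real.exp ‖A‖ * ‖R‖ * Λ * Real.sqrt n * T ^ ((3:ℝ)/2) := by ring

end
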